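/- The set of all values of the series ∑_{n=1}^∞ 1/∏_{i=1}^{f(n)} (n+i), as (f(n))_{n=1}^∞ ranges over all (weakly) increasing sequences of positive integers with lim_{n→∞} f(n) = ∞, has empty interior in ℝ. -/

import Mathlib

open Filter Finset

namespace Stmt3Aux


def P (m k : ℕ) : ℕ := ∏ i ∈ Finset.Icc 1 k, (m + i)

noncomputable def a (m k : ℕ) : ℝ := 1 / (P m k : ℝ)

lemma Ppos (m k : ℕ) : 0 < P m k := by
  refine Finset.prod_pos fun i hi => ?_
  have := Finset.mem_Icc.mp hi; omega

lemma Psucc (m k : ℕ) : P m (k + 1) = P m k * (m + (k + 1)) := by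
  unfold P
  rw [Finset.prod_Icc_succ_top (by omega)]

lemma Pshift (m k : ℕ) : P (m + 1) k * (m + 1) = P m (k + 1) := by
  induction k with
  | zero => simp [P]
  | succ k ih =>
      rw [Psucc, Psucc]
      ring_nf
      ring_nf at ih
      nlinarith [ih]

lemma Pmono (m : ℕ) {k l : ℕ} (h : k ≤ l) : P m k ≤ P m l := by
  unfold P
  refine Finset.prod_le_prod_of_subset_of_one_le' (Finset.Icc_subset_Icc_right h) ?_
  intro i hi _; have := Finset.mem_Icc.mp hi; omega

lemma apos (m k : ℕ) : 0 < a m k := by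
  unfold a
  have : (0:ℝ) < (P m k : ℝ) := by exact_mod_cast Ppos m k
  positivity

lemma a_anti (m : ℕ) {k l : ℕ} (h : k ≤ l) : a m l ≤ a m k := by
  unfold a
  have h1 := Ppos m k
  have h2 := Pmono m h
  have h1' : (0:ℝ) < (P m k : ℝ) := by exact_mod_cast h1
  apply one_div_le_one_div_of_le h1'
  exact_mod_cast h2

lemma a_ident (m k : ℕ) (hk : 1 ≤ k) :
    a m (k + 1) = (a m k - a (m + 1) k) / k := by
  have hA : (0:ℝ) < (P m k : ℝ) := by exact_mod_cast Ppos m k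
  have hB : (0:ℝ) < (P (m+1) k : ℝ) := by exact_mod_cast Ppos (m+1) k
  have hC : (0:ℝ) < (P m (k+1) : ℝ) := by exact_mod_cast Ppos m (k+1)
  have hk' : (0:ℝ) < (k:ℝ) := by exact_mod_cast hk
  have h1 : (P m (k+1) : ℝ) = (P m k : ℝ) * (m + (k+1)) := by
    have := Psucc m k; push_cast [this]; ring
  have h2 : (P (m+1) k : ℝ) * (m + 1) = (P m (k+1) : ℝ) := by
    have := Pshift m k; push_cast [← this]; ring
  unfold a
  field_simp
  nlinarith [h1, h2]

/-- Telescoping bound: `∑_{m ∈ [N, M)} a m (k+1) ≤ a N k / k` for `k ≥ 1`. -/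
lemma sum_bound (k : ℕ) (hk : 1 ≤ k) (N M : ℕ) :
    ∑ m ∈ Finset.Ico N M, a m (k + 1) ≤ a N k / k := by
  have hk' : (0:ℝ) < (k:ℝ) := by exact_mod_cast hk
  rcases le_or_gt M N with h | h
  · rw [Finset.Ico_eq_empty (by omega)]
    simp
    have := apos N k
    positivity
  · have key : ∀ M', N ≤ M' → ∑ m ∈ Finset.Ico N M', a m (k + 1)
        = (a N k - a M' k) / k := by
      intro M' hM'
      induction M', hM' using Nat.le_induction with
      | base => simp
      | succ M' hM' ih =>
          rw [Finset.sum_Ico_succ_top hM', ih, a_ident M' k hk]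
          ring
    rw [key M h.le]
    have := apos M k
    have := apos N k
    gcongr
    linarith [apos M k]



section Tail

variable {f : ℕ → ℕ}

/-- Upper bound on the tail sum when `f` is eventually `≥ k+1`. -/
lemma tail_ub (hsum : Summable (fun n => a (n + 1) (f (n + 1))))
    (N k : ℕ) (hk : 1 ≤ k) (hbig : ∀ n, N ≤ n → k + 1 ≤ f (n + 1)) :
    ∑' n, a (n + N + 1) (f (n + N + 1)) ≤ a (N + 1) k / k := by
  have hsum' : Summable (fun n => a (n + N + 1) (f (n + N + 1))) := by
    have := (summable_nat_add_iff N).mpr hsum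
    simpa using this
  refine Summable.tsum_le_of_sum_le hsum' ?_
  intro u
  obtain ⟨M, hM⟩ := Finset.exists_nat_subset_range u
  calc ∑ n ∈ u, a (n + N + 1) (f (n + N + 1))
      ≤ ∑ n ∈ Finset.range M, a (n + N + 1) (f (n + N + 1)) := by
        refine Finset.sum_le_sum_of_subset_of_nonneg hM ?_
        intro i _ _; exact (apos _ _).le
    _ ≤ ∑ n ∈ Finset.range M, a (n + N + 1) (k + 1) := by
        refine Finset.sum_le_sum ?_
        intro i _
        exact a_anti _ (hbig (i + N) (by omega))
    _ = ∑ m ∈ Finset.Ico (N + 1) (N + 1 + M), a m (k + 1) := by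
        rw [Finset.sum_Ico_eq_sum_range]
        simp only [Nat.add_sub_cancel_left]
        refine Finset.sum_congr rfl fun i _ => ?_
        ring_nf
    _ ≤ a (N + 1) k / k := sum_bound k hk (N + 1) (N + 1 + M)

/-- Strict lower bound on the tail sum by its first term. -/
lemma tail_lb (hsum : Summable (fun n => a (n + 1) (f (n + 1)))) (N : ℕ) :
    a (N + 1) (f (N + 1)) < ∑' n, a (n + N + 1) (f (n + N + 1)) := by
  have hsum' : Summable (fun n => a (n + N + 1) (f (n + N + 1))) := by
    have := (summable_nat_add_iff N).mpr hsum
    simpa using this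
  have h0 := Summable.tsum_eq_zero_add hsum'
  rw [h0]
  simp only [Nat.zero_add]
  have hpos : 0 < ∑' n, a (n + 1 + N + 1) (f (n + 1 + N + 1)) := by
    refine Summable.tsum_pos ?_ (fun i => (apos _ _).le) 0 (apos _ _)
    have := (summable_nat_add_iff 1).mpr hsum'
    simpa [add_assoc, add_comm, add_left_comm] using this
  linarith [hpos]

/-- Decomposition of the total sum. -/
lemma sum_decomp {x : ℝ} (hs : HasSum (fun n => a (n + 1) (f (n + 1))) x) (N : ℕ) :
    x = ∑ n ∈ Finset.range N, a (n + 1) (f (n + 1))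
        + ∑' n, a (n + N + 1) (f (n + N + 1)) := by
  have := (Summable.sum_add_tsum_nat_add (f := fun n => a (n + 1) (f (n + 1))) N hs.summable)
  rw [hs.tsum_eq] at this
  rw [← this]

end Tail



/-- The gap `(σ_N + a(N+1,k)/k, σ_N + a(N+1,k))` contains no achievable sum. -/
lemma key (f : ℕ → ℕ) (hf1 : ∀ n, 1 ≤ f n) (hmono : Monotone f)
    (N : ℕ) (hN : 1 ≤ N) (c : ℝ)
    (hc1 : a (N + 1) (f N) / (f N) < c) (hc2 : c < a (N + 1) (f N))
    (f' : ℕ → ℕ) (hf'1 : ∀ n, 1 ≤ f' n) (hmono' : Monotone f')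
    (hs' : HasSum (fun n => a (n + 1) (f' (n + 1)))
      (∑ n ∈ Finset.range N, a (n + 1) (f (n + 1)) + c)) : False := by
  have hcpos : 0 < c := by
    have h1 := apos (N + 1) (f N)
    have h2 : (0:ℝ) < (f N : ℝ) := by exact_mod_cast hf1 N
    have : 0 < a (N + 1) (f N) / (f N) := by positivity
    linarith
  have hsum' := hs'.summable
  -- the first `N` values of `f'` must agree with those of `f`
  have claim : ∀ n, n < N → f' (n + 1) = f (n + 1) := by
    intro n
    induction n using Nat.strong_induction_on with
    | _ n ih =>
      intro hnN
      have hσ : ∑ j ∈ Finset.range n, a (j + 1) (f' (j + 1))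
          = ∑ j ∈ Finset.range n, a (j + 1) (f (j + 1)) :=
        Finset.sum_congr rfl fun j hj => by
          rw [ih j (Finset.mem_range.mp hj) (lt_trans (Finset.mem_range.mp hj) hnN)]
      have hdec := sum_decomp hs' n
      rw [hσ] at hdec
      set t' := ∑' j, a (j + n + 1) (f' (j + n + 1)) with ht'def
      have hsplit : ∑ j ∈ Finset.range N, a (j + 1) (f (j + 1))
          = ∑ j ∈ Finset.range n, a (j + 1) (f (j + 1))
            + ∑ j ∈ Finset.Ico n N, a (j + 1) (f (j + 1)) := by
        rw [Finset.range_eq_Ico, Finset.range_eq_Ico]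
        exact (Finset.sum_Ico_consecutive (fun j => a (j + 1) (f (j + 1))) (Nat.zero_le n) (le_of_lt hnN)).symm
      have ht' : t' = ∑ j ∈ Finset.Ico n N, a (j + 1) (f (j + 1)) + c := by
        rw [hsplit] at hdec
        linarith
      set K := f (n + 1) with hKdef
      have hK1 : 1 ≤ K := hf1 (n + 1)
      have hKN : K ≤ f N := hmono (by omega)
      -- lower bound : a (n+1) K < t'
      have hlow : a (n + 1) K < t' := by
        have hmem : n ∈ Finset.Ico n N := Finset.mem_Ico.mpr ⟨le_refl n, hnN⟩
        have hs1 := Finset.single_le_sum (f := fun j => a (j + 1) (f (j + 1)))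
          (fun j _ => (apos _ _).le) hmem
        rw [ht']
        linarith
      -- upper bound : t' ≤ a (n+1) (K-1) / (K-1) when K ≥ 2
      have hupp : 2 ≤ K → t' ≤ a (n + 1) (K - 1) / ((K : ℝ) - 1) := by
        intro hK2
        have h2 : c ≤ a (N + 1) K := le_of_lt (lt_of_lt_of_le hc2 (a_anti _ hKN))
        have h3 : t' ≤ ∑ j ∈ Finset.Ico n N, a (j + 1) K + a (N + 1) K := by
          rw [ht']
          have hss : ∑ j ∈ Finset.Ico n N, a (j + 1) (f (j + 1))
              ≤ ∑ j ∈ Finset.Ico n N, a (j + 1) K := by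
            refine Finset.sum_le_sum fun j hj => a_anti _ (hmono ?_)
            have := (Finset.mem_Ico.mp hj).1
            omega
          linarith
        have h4 : ∑ j ∈ Finset.Ico n N, a (j + 1) K + a (N + 1) K
            = ∑ m ∈ Finset.Ico (n + 1) (N + 2), a m K := by
          rw [Finset.sum_Ico_eq_sum_range, Finset.sum_Ico_eq_sum_range]
          have e1 : N + 2 - (n + 1) = (N - n) + 1 := by omega
          rw [e1, Finset.sum_range_succ]
          have e2 : n + 1 + (N - n) = N + 1 := by omega
          rw [e2]
          congr 1
          · have e3 : N - n = N - n := rfl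
            refine Finset.sum_congr rfl fun i _ => ?_
            congr 1
            omega
        have h5 := sum_bound (K - 1) (by omega) (n + 1) (N + 2)
        have hKK : K - 1 + 1 = K := by omega
        rw [hKK] at h5
        have hcast : ((K - 1 : ℕ) : ℝ) = (K : ℝ) - 1 := by
          push_cast [Nat.cast_sub hK1]
          ring
        rw [hcast] at h5
        linarith
      rcases lt_trichotomy (f' (n + 1)) K with hlt | heq | hgt
      · -- f'(n+1) < K, so K ≥ 2
        exfalso
        have hK2 : 2 ≤ K := by have := hf'1 (n + 1); omega
        have hlb' := tail_lb hsum' n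
        have h6 : a (n + 1) (K - 1) ≤ a (n + 1) (f' (n + 1)) := a_anti _ (by omega)
        have h7 := hupp hK2
        have h8 : a (n + 1) (K - 1) / ((K : ℝ) - 1) ≤ a (n + 1) (K - 1) := by
          apply div_le_self (apos _ _).le
          have : (2:ℝ) ≤ (K:ℝ) := by exact_mod_cast hK2
          linarith
        linarith
      · exact heq
      · -- f'(n+1) > K
        exfalso
        set k' := f' (n + 1) with hk'def
        have hk'2 : 2 ≤ k' := by omega
        have h7 := tail_ub hsum' n (k' - 1) (by omega) (fun m hm => by
          have := hmono' (show n + 1 ≤ m + 1 by omega)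
          omega)
        have h8 : a (n + 1) (k' - 1) ≤ a (n + 1) K := a_anti _ (by omega)
        have h9 : a (n + 1) (k' - 1) / ((k' - 1 : ℕ) : ℝ) ≤ a (n + 1) (k' - 1) := by
          apply div_le_self (apos _ _).le
          have : (1:ℕ) ≤ k' - 1 := by omega
          exact_mod_cast this
        linarith
  -- now the final contradiction at position N+1
  have hfN' : f' N = f N := by
    have h := claim (N - 1) (by omega)
    have hNN : N - 1 + 1 = N := by omega
    rwa [hNN] at h
  have hσN : ∑ j ∈ Finset.range N, a (j + 1) (f' (j + 1))
      = ∑ j ∈ Finset.range N, a (j + 1) (f (j + 1)) :=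
    Finset.sum_congr rfl fun j hj => by rw [claim j (Finset.mem_range.mp hj)]
  have hdec := sum_decomp hs' N
  rw [hσN] at hdec
  have htc : ∑' j, a (j + N + 1) (f' (j + N + 1)) = c := by linarith
  have h1N := hf1 N
  have hge : f N ≤ f' (N + 1) := hfN' ▸ hmono' (Nat.le_succ N)
  rcases eq_or_lt_of_le hge with heq | hgt
  · have h := tail_lb hsum' N
    rw [htc, ← heq] at h
    linarith
  · set k' := f' (N + 1) with hk'def
    have h7 := tail_ub hsum' N (k' - 1) (by omega) (fun m hm => by
      have := hmono' (show N + 1 ≤ m + 1 by omega)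
      omega)
    rw [htc] at h7
    have h8 : a (N + 1) (k' - 1) ≤ a (N + 1) (f N) := a_anti _ (by omega)
    have h9 : a (N + 1) (k' - 1) / ((k' - 1 : ℕ) : ℝ) ≤ a (N + 1) (f N) / (f N) := by
      apply div_le_div₀ (apos _ _).le h8
      · exact_mod_cast hf1 N
      · exact_mod_cast (by omega : f N ≤ k' - 1)
    linarith


end Stmt3Aux

open Stmt3Aux

/-- The set of all sums `∑_{n=1}^∞ 1/((n+1)(n+2)⋯(n+f(n)))`, as `f` ranges over all weakly
increasing sequences of positive integers tending to infinity, has empty interior in `ℝ`. -/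
theorem stmt3 :
    interior
      {x : ℝ | ∃ f : ℕ → ℕ, (∀ n, 1 ≤ f n) ∧ Monotone f ∧ Tendsto f atTop atTop ∧
        HasSum (fun n : ℕ =>
          (1 : ℝ) / ((∏ i ∈ Finset.Icc 1 (f (n + 1)), (n + 1 + i) : ℕ) : ℝ)) x}
      = ∅ := by
  set S : Set ℝ := {x : ℝ | ∃ f : ℕ → ℕ, (∀ n, 1 ≤ f n) ∧ Monotone f ∧ Tendsto f atTop atTop ∧
        HasSum (fun n : ℕ =>
          (1 : ℝ) / ((∏ i ∈ Finset.Icc 1 (f (n + 1)), (n + 1 + i) : ℕ) : ℝ)) x} with hS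
  rw [Set.eq_empty_iff_forall_notMem]
  intro x₀ hx₀
  obtain ⟨f, hf1, hmono, htend, hs₀⟩ := interior_subset hx₀
  have hs : HasSum (fun n => a (n + 1) (f (n + 1))) x₀ := hs₀
  obtain ⟨ε, hε, hball⟩ := Metric.mem_nhds_iff.mp (mem_interior_iff_mem_nhds.mp hx₀)
  obtain ⟨N₀, hN₀⟩ := Filter.eventually_atTop.mp (htend.eventually_ge_atTop 2)
  obtain ⟨M, hM⟩ := exists_nat_gt (1 / ε)
  set N : ℕ := max (max N₀ 1) M with hNdef
  have hN1 : 1 ≤ N := le_trans (le_max_right N₀ 1) (le_max_left _ _)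
  have hNN₀ : N₀ ≤ N := le_trans (le_max_left N₀ 1) (le_max_left _ _)
  have hNM : M ≤ N := le_max_right _ _
  have hk2 : 2 ≤ f N := hN₀ N hNN₀
  set k : ℕ := f N with hkdef
  set A : ℝ := a (N + 1) k with hA
  have hApos : 0 < A := apos _ _
  have hkR : (2:ℝ) ≤ (k:ℝ) := by exact_mod_cast hk2
  have hAk : A / (k:ℝ) < A := div_lt_self hApos (by linarith)
  set c : ℝ := (A / (k:ℝ) + A) / 2 with hc
  have hc1 : A / (k:ℝ) < c := by rw [hc]; linarith
  have hc2 : c < A := by rw [hc]; linarith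
  have hcpos : 0 < c := by
    have : 0 < A / (k:ℝ) := by positivity
    linarith
  -- the bound 1/(N+2)
  have hP1 : P (N + 1) 1 = N + 2 := by simp [P]
  have hB : a (N + 1) 1 = 1 / ((N:ℝ) + 2) := by
    rw [a, hP1]; norm_num
  have hBε : 1 / ((N:ℝ) + 2) < ε := by
    have hMN : (M:ℝ) ≤ (N:ℝ) := by exact_mod_cast hNM
    have h2 : 1 / ε < (N:ℝ) + 2 := by linarith
    rw [div_lt_iff₀ (by positivity)]
    rw [div_lt_iff₀ hε] at h2
    nlinarith
  have hAB : A ≤ a (N + 1) 1 := a_anti _ (by omega)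
  -- decompose x₀
  set σ : ℝ := ∑ n ∈ Finset.range N, a (n + 1) (f (n + 1)) with hσ
  set t : ℝ := ∑' n, a (n + N + 1) (f (n + N + 1)) with ht
  have hx₀eq : x₀ = σ + t := sum_decomp hs N
  have htpos : 0 < t := lt_trans (apos _ _) (tail_lb hs.summable N)
  have htub : t ≤ a (N + 1) 1 := by
    have := tail_ub hs.summable N 1 le_rfl (fun n hn => hN₀ (n + 1) (by omega))
    simpa using this
  -- the gap point
  set y : ℝ := σ + c with hy
  have hyball : y ∈ Metric.ball x₀ ε := by
    rw [Metric.mem_ball, Real.dist_eq, hy, hx₀eq]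
    have h1 : c < 1 / ((N:ℝ) + 2) := lt_of_lt_of_le hc2 (le_trans hAB hB.le)
    have h2 : t ≤ 1 / ((N:ℝ) + 2) := le_trans htub hB.le
    rw [abs_lt]
    constructor <;> [skip; skip] <;> push_cast <;> nlinarith
  obtain ⟨f', hf'1, hmono', htend', hs'₀⟩ := hball hyball
  have hs' : HasSum (fun n => a (n + 1) (f' (n + 1))) (σ + c) := hs'₀
  exact key f hf1 hmono N hN1 c hc1 hc2 f' hf'1 hmono' hs'
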